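/- Let Q be a convex Hilbert cube in the Hilbert space ℓ₂ with the metric from the ℓ₂ norm, and fix p ∈ Q. For each finite nonempty K ⊆ Q, let η_p(K) be the unique point of the convex hull co(K) nearest to p. Then η_p : F_n(Q) → Q is continuous. -/

import Mathlib

open Metric TopologicalSpace Set Filter unitInterval
open Topology

/-- The n-th symmetric product: nonempty subsets with at most n points,
as a subspace of the nonempty compact subsets with the Hausdorff metric. -/
abbrev SymProd (X : Type*) [MetricSpace X] (n : ℕ) :=
  {A : NonemptyCompacts X // (A : Set X).Finite ∧ (A : Set X).ncard ≤ n}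

/-- A Z-set in a metric space. -/
def IsZSet {Y : Type*} [MetricSpace Y] (A : Set Y) : Prop :=
  IsClosed A ∧ ∀ ε > 0, ∃ f : Y → Y, Continuous f ∧ (∀ y, f y ∉ A) ∧ ∀ y, dist y (f y) < ε

/-- A Z-map: a continuous map whose image is a Z-set. -/
def IsZMap {X Y : Type*} [MetricSpace X] [MetricSpace Y] (f : X → Y) : Prop :=
  Continuous f ∧ IsZSet (Set.range f)


/-- The Hilbert space ℓ₂ of square-summable real sequences. -/
noncomputable abbrev ellTwo := lp (fun _ : ℕ => ℝ) 2

/-- Uniqueness of the nearest point of a convex set in an inner product space. -/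
lemma my_nearest_unique {E : Type*} [NormedAddCommGroup E] [InnerProductSpace ℝ E]
    {C : Set E} (hC : Convex ℝ C) {p x y : E} (hx : x ∈ C) (hy : y ∈ C)
    (hx' : ∀ z ∈ C, dist p x ≤ dist p z) (hy' : ∀ z ∈ C, dist p y ≤ dist p z) : x = y := by
  have hm : (1/2 : ℝ) • x + (1/2 : ℝ) • y ∈ C := hC hx hy (by norm_num) (by norm_num) (by norm_num)
  have h1 : dist p x ≤ dist p ((1/2 : ℝ) • x + (1/2 : ℝ) • y) := hx' _ hm
  have h2 : dist p y ≤ dist p x := hy' _ hx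
  have h3 : dist p x ≤ dist p y := hx' _ hy
  have hxy : dist p x = dist p y := le_antisymm h3 h2
  have hpar := parallelogram_law_with_norm ℝ (p - x) (p - y)
  have hsum : (p - x) + (p - y) = (2 : ℝ) • (p - ((1/2 : ℝ) • x + (1/2 : ℝ) • y)) := by
    module
  have hdiff : (p - x) - (p - y) = y - x := by abel
  rw [hsum, hdiff, norm_smul] at hpar
  rw [show ‖(2:ℝ)‖ = 2 by norm_num] at hpar
  simp only [dist_eq_norm] at h1 h2 h3 hxy
  have key : ‖y - x‖ = 0 := by
    nlinarith [norm_nonneg (y - x), norm_nonneg (p - ((1/2 : ℝ) • x + (1/2 : ℝ) • y)),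
      norm_nonneg (p - x), norm_nonneg (p - y), mul_self_le_mul_self (norm_nonneg (p - x)) h1]
  have : y - x = 0 := norm_eq_zero.mp key
  linear_combination (norm := abel) -this

/-- If every point of `A` is within `r` of some point of `B`, then the convex hull of `A`
is inside the `r`-cthickening of the convex hull of `B`. -/
lemma my_hull_subset_cthickening {E : Type*} [NormedAddCommGroup E] [NormedSpace ℝ E]
    {A B : Set E} {r : ℝ} (h : ∀ a ∈ A, ∃ b ∈ B, dist a b ≤ r) :
    convexHull ℝ A ⊆ cthickening r (convexHull ℝ B) := by
  refine convexHull_min (fun a ha => ?_) ((convex_convexHull ℝ B).cthickening r)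
  obtain ⟨b, hb, hd⟩ := h a ha
  exact mem_cthickening_of_dist_le a b r _ (subset_convexHull ℝ B hb) hd

lemma my_exists_of_cthickening {E : Type*} [PseudoMetricSpace E] {C : Set E}
    (hC : IsCompact C) (hne : C.Nonempty) {z : E} {r : ℝ} (hr : 0 ≤ r)
    (hz : z ∈ cthickening r C) : ∃ w ∈ C, dist z w ≤ r := by
  obtain ⟨w, hw, hwd⟩ := hC.exists_infDist_eq_dist hne z
  refine ⟨w, hw, ?_⟩
  rw [← hwd]
  rw [mem_cthickening_iff] at hz
  have h1 : infDist z C = (EMetric.infEdist z C).toReal := rfl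
  rw [h1, ← ENNReal.toReal_ofReal hr]
  exact ENNReal.toReal_mono ENNReal.ofReal_ne_top hz

theorem stmt11 (n : ℕ) (hn : 0 < n)
    (Q : Set ellTwo) (hconv : Convex ℝ Q) (hcomp : IsCompact Q)
    (hQ : Nonempty (Q ≃ₜ (ℕ → I))) (p : ellTwo) (hp : p ∈ Q)
    (η : SymProd Q n → Q)
    (hη : ∀ K : SymProd Q n,
      ((η K : Q) : ellTwo) ∈ convexHull ℝ (((↑) : Q → ellTwo) '' (K.1 : Set Q)) ∧
      ∀ z ∈ convexHull ℝ (((↑) : Q → ellTwo) '' (K.1 : Set Q)),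
        dist p ((η K : Q) : ellTwo) ≤ dist p z) :
    Continuous η := by
  have hQc : CompactSpace Q := isCompact_iff_compactSpace.mp hcomp
  set S : SymProd Q n → Set ellTwo := fun J => ((↑) : Q → ellTwo) '' (J.1 : Set Q) with hS
  have hSfin : ∀ J, (S J).Finite := fun J => J.2.1.image _
  have hCcomp : ∀ J, IsCompact (convexHull ℝ (S J)) := fun J => (hSfin J).isCompact_convexHull (𝕜 := ℝ)
  have hCne : ∀ J, (convexHull ℝ (S J)).Nonempty :=
    fun J => ((J.1.nonempty).image _).mono (subset_convexHull ℝ _)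
  have key : ∀ (J L : SymProd Q n), ∀ ε > 0, dist J L < ε →
      ∀ a ∈ S J, ∃ b ∈ S L, dist a b ≤ ε := by
    intro J L ε hε hd a ha
    obtain ⟨a', ha', rfl⟩ := ha
    have hfin : EMetric.hausdorffEdist ((J.1 : NonemptyCompacts Q) : Set Q)
        ((L.1 : NonemptyCompacts Q) : Set Q) ≠ ⊤ :=
      hausdorffEdist_ne_top_of_nonempty_of_bounded J.1.nonempty L.1.nonempty
        J.1.isCompact.isBounded L.1.isCompact.isBounded
    have hhd : hausdorffDist ((J.1 : NonemptyCompacts Q) : Set Q)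
        ((L.1 : NonemptyCompacts Q) : Set Q) < ε := by
      rw [Subtype.dist_eq, NonemptyCompacts.dist_eq] at hd
      exact hd
    obtain ⟨b', hb', hab⟩ := exists_dist_lt_of_hausdorffDist_lt ha' hhd hfin
    refine ⟨b', mem_image_of_mem _ hb', ?_⟩
    rw [← Subtype.dist_eq]
    exact hab.le
  set_option synthInstance.maxHeartbeats 1000000 in
  refine SeqContinuous.continuous ?_
  intro x K hx
  apply tendsto_of_subseq_tendsto
  intro ns hns
  obtain ⟨q, -, φ, hφ, hq⟩ :=
    isCompact_univ.tendsto_subseq (x := fun i => η (x (ns i))) (fun i => mem_univ _)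
  refine ⟨φ, ?_⟩
  set m : ℕ → SymProd Q n := fun i => x (ns (φ i)) with hmdef
  have hm : Tendsto m atTop (𝓝 K) := hx.comp (hns.comp hφ.tendsto_atTop)
  have hq' : Tendsto (fun i => ((η (m i) : Q) : ellTwo)) atTop (𝓝 ((q : Q) : ellTwo)) :=
    (continuous_subtype_val.tendsto q).comp hq
  have hmemq : ((q : Q) : ellTwo) ∈ convexHull ℝ (S K) := by
    rw [IsClosed.mem_iff_infDist_zero (hCcomp K).isClosed (hCne K)]
    refine le_antisymm ?_ infDist_nonneg
    refine le_of_forall_pos_le_add fun ε hε => ?_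
    rw [zero_add]
    have hb : ∀ᶠ i in atTop, infDist ((η (m i) : Q) : ellTwo) (convexHull ℝ (S K)) ≤ ε := by
      filter_upwards [Metric.tendsto_nhds.mp hm ε hε] with i hi
      have hsub := my_hull_subset_cthickening (key (m i) K ε hε hi)
      obtain ⟨w, hw, hdw⟩ :=
        my_exists_of_cthickening (hCcomp K) (hCne K) hε.le (hsub (hη (m i)).1)
      exact le_trans (infDist_le_dist_of_mem hw) hdw
    exact le_of_tendsto (((continuous_infDist_pt _).tendsto _).comp hq') hb
  have hminq : ∀ z ∈ convexHull ℝ (S K), dist p ((q : Q) : ellTwo) ≤ dist p z := by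
    intro z hz
    refine le_of_forall_pos_le_add fun ε hε => ?_
    have hb : ∀ᶠ i in atTop, dist p ((η (m i) : Q) : ellTwo) ≤ dist p z + ε := by
      filter_upwards [Metric.tendsto_nhds.mp hm ε hε] with i hi
      have hi' : dist K (m i) < ε := by rwa [dist_comm]
      have hsub := my_hull_subset_cthickening (key K (m i) ε hε hi')
      obtain ⟨w, hw, hdw⟩ :=
        my_exists_of_cthickening (hCcomp (m i)) (hCne (m i)) hε.le (hsub hz)
      calc dist p ((η (m i) : Q) : ellTwo) ≤ dist p w := (hη (m i)).2 w hw
        _ ≤ dist p z + dist z w := dist_triangle p z w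
        _ ≤ dist p z + ε := by linarith
    exact le_of_tendsto ((continuous_const.dist continuous_id).continuousAt.tendsto.comp hq') hb
  have hfinal : ((q : Q) : ellTwo) = ((η K : Q) : ellTwo) :=
    my_nearest_unique (convex_convexHull ℝ (S K)) hmemq (hη K).1 hminq (hη K).2
  have hqK : q = η K := Subtype.ext hfinal
  rw [← hqK]
  exact hq
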